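/- Let 0 < ε < 1/2, let m ≥ 1 be a natural number, and set b_k = (6/ε)^(k−1) for k ≥ 1. Let x : ℤ → ℝ satisfy x_j = 0 for all j ≤ 0 and, for every k with 1 ≤ k ≤ m, the inequality ε·|x_k| ≤ b_k − 2·x_{k−1} + 7·x_{k−2} − 7·x_{k−3} + 2·x_{k−4}. Then |x_k| ≤ (1/3)·(6/ε)^k for every k with 1 ≤ k ≤ m. -/

import Mathlib

/-- The inductive coordinate bound for the deformed cube `D_m^ε`: if
`0 < ε < 1/2`, `b_k = (6/ε)^(k-1)`, `x_j = 0` for `j ≤ 0`, and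
`ε·|x_k| ≤ b_k - 2x_{k-1} + 7x_{k-2} - 7x_{k-3} + 2x_{k-4}` for `1 ≤ k ≤ m`,
then `|x_k| ≤ (1/3)·(6/ε)^k` for all `1 ≤ k ≤ m`. -/
theorem stmt_11 (ε : ℝ) (hε0 : 0 < ε) (hε : ε < 1 / 2) (m : ℕ) (hm : 1 ≤ m)
    (x : ℤ → ℝ) (hx0 : ∀ j : ℤ, j ≤ 0 → x j = 0)
    (hineq : ∀ k : ℤ, 1 ≤ k → k ≤ (m : ℤ) →
      ε * |x k| ≤ (6 / ε) ^ (k - 1) - 2 * x (k - 1) + 7 * x (k - 2)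
        - 7 * x (k - 3) + 2 * x (k - 4)) :
    ∀ k : ℤ, 1 ≤ k → k ≤ (m : ℤ) → |x k| ≤ (1 / 3) * (6 / ε) ^ k := by
  set r : ℝ := 6 / ε with hrdef
  have hr12 : 12 < r := by
    rw [hrdef, lt_div_iff₀ hε0]; nlinarith
  have hr0 : (0:ℝ) < r := by linarith
  have hrne : r ≠ 0 := ne_of_gt hr0
  have key : ∀ n : ℕ, ∀ k : ℤ, k ≤ (n : ℤ) → k ≤ (m : ℤ) → |x k| ≤ (1 / 3) * r ^ k := by
    intro n
    induction n with
    | zero =>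
      intro k hk _
      rw [hx0 k (by exact_mod_cast hk), abs_zero]
      positivity
    | succ n ih =>
      intro k hk hkm
      by_cases hkn : k ≤ (n : ℤ)
      · exact ih k hkn hkm
      · have hk1 : k = (n : ℤ) + 1 := by push_cast at hk ⊢; omega
        have h1 : (1:ℤ) ≤ k := by omega
        have hb := hineq k h1 hkm
        have bnd : ∀ i : ℤ, 1 ≤ i → |x (k - i)| ≤ (1/3) * r ^ (k - i) :=
          fun i hi => ih (k - i) (by omega) (by omega)
        have ht : (0:ℝ) < r ^ (k - 4) := zpow_pos hr0 _
        set t : ℝ := r ^ (k - 4) with htdef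
        have e0 : r ^ k = t * r ^ (4:ℕ) := by
          rw [htdef, ← zpow_natCast r 4, ← zpow_add₀ hrne]; ring_nf
        have e1 : r ^ (k - 1) = t * r ^ (3:ℕ) := by
          rw [htdef, ← zpow_natCast r 3, ← zpow_add₀ hrne]; ring_nf
        have e2 : r ^ (k - 2) = t * r ^ (2:ℕ) := by
          rw [htdef, ← zpow_natCast r 2, ← zpow_add₀ hrne]; ring_nf
        have e3 : r ^ (k - 3) = t * r ^ (1:ℕ) := by
          rw [htdef, ← zpow_natCast r 1, ← zpow_add₀ hrne]; ring_nf
        have b1 := bnd 1 le_rfl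
        have b2 := bnd 2 (by norm_num)
        have b3 := bnd 3 (by norm_num)
        have b4 := bnd 4 (by norm_num)
        rw [e1] at b1 hb
        rw [e2] at b2
        rw [e3] at b3
        have b4' : |x (k - 4)| ≤ (1/3) * t := by simpa using b4
        have habs1 := abs_le.mp b1
        have habs2 := abs_le.mp b2
        have habs3 := abs_le.mp b3
        have habs4 := abs_le.mp b4'
        have hmain : ε * |x k| ≤ 2 * t * r ^ (3:ℕ) := by
          nlinarith [hb, habs1.1, habs1.2, habs2.1, habs2.2, habs3.1, habs3.2,
            habs4.1, habs4.2, ht, hr12, sq_nonneg r]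
        rw [e0]
        have hεr : ε * r = 6 := by rw [hrdef]; field_simp
        have : ε * ((1/3) * (t * r ^ (4:ℕ))) = 2 * t * r ^ (3:ℕ) := by
          linear_combination ((1/3) * t * r ^ (3:ℕ)) * hεr
        have := hmain.trans_eq this.symm
        exact le_of_mul_le_mul_left (by linarith) hε0
  intro k hk1 hkm
  exact key m k hkm hkm
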